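/- Let M be a d×d integer matrix having a simple real eigenvalue λ > 1 with a strictly positive left eigenvector ω_L ∈ ℝ^d, and such that every other complex eigenvalue of M has modulus strictly less than 1. If z ∈ ℤ^d satisfies ⟨ω_L, z⟩ = 0, then Mⁿ z = 0 for some n ∈ ℕ; that is, z lies in the generalized null space of M. -/

import Mathlib

open Matrix Polynomial Filter Module

lemma charpoly_sub_smul_one {n : Type*} [DecidableEq n] [Fintype n] {R : Type*} [CommRing R]
    (A : Matrix n n R) (t : R) :
    (A - t • (1 : Matrix n n R)).charpoly = A.charpoly.comp (X + C t) := by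
  have h : (A - t • 1).charmatrix = A.charmatrix.map (aeval (X + C t)) := by
    ext i j
    by_cases hij : i = j
    · subst hij
      simp only [charmatrix_apply_eq, Matrix.map_apply, Matrix.sub_apply, Matrix.smul_apply,
        Matrix.one_apply_eq, map_sub, aeval_X, aeval_C, smul_eq_mul, mul_one,
        Polynomial.algebraMap_eq]
      ring
    · simp [charmatrix_apply_ne _ _ _ hij, Matrix.map_apply, hij]
  rw [Matrix.charpoly, h, comp_eq_aeval, Matrix.charpoly, AlgHom.map_det]
  rfl

lemma vecMul_smulMat {n : Type*} [Fintype n] {R : Type*} [CommRing R]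
    (ω : n → R) (c : R) (B : Matrix n n R) : ω ᵥ* (c • B) = c • (ω ᵥ* B) := by
  funext j
  simp [Matrix.vecMul, dotProduct, Finset.mul_sum, mul_left_comm]

lemma mulVec_smulMat {n : Type*} [Fintype n] {R : Type*} [CommRing R]
    (v : n → R) (c : R) (B : Matrix n n R) : (c • B) *ᵥ v = c • (B *ᵥ v) := by
  funext j
  simp [Matrix.mulVec, dotProduct, Finset.mul_sum, mul_assoc]

lemma vecMul_aeval {n : Type*} [DecidableEq n] [Fintype n] {R : Type*} [CommRing R]
    (A : Matrix n n R) (ω : n → R) (t : R) (h : ω ᵥ* A = t • ω) (q : R[X]) :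
    ω ᵥ* (aeval A q) = eval t q • ω := by
  have hpow : ∀ k : ℕ, ω ᵥ* (A ^ k) = t ^ k • ω := by
    intro k
    induction k with
    | zero => simp
    | succ k ih =>
      rw [pow_succ, ← Matrix.vecMul_vecMul, ih, Matrix.smul_vecMul, h, smul_smul, pow_succ]
  induction q using Polynomial.induction_on' with
  | add p q hp hq => rw [map_add, Matrix.vecMul_add, hp, hq, eval_add, add_smul]
  | monomial k c =>
    rw [aeval_monomial, eval_monomial, Algebra.algebraMap_eq_smul_one, smul_mul_assoc, one_mul,
      vecMul_smulMat, hpow, smul_smul]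

lemma aeval_mulVec_eig {n : Type*} [DecidableEq n] [Fintype n] {R : Type*} [CommRing R]
    (A : Matrix n n R) (v : n → R) (t : R) (h : A *ᵥ v = t • v) (q : R[X]) :
    (aeval A q) *ᵥ v = eval t q • v := by
  have hpow : ∀ k : ℕ, (A ^ k) *ᵥ v = t ^ k • v := by
    intro k
    induction k with
    | zero => simp
    | succ k ih =>
      rw [pow_succ', ← Matrix.mulVec_mulVec, ih, Matrix.mulVec_smul, h, smul_smul,
        mul_comm, pow_succ']
  induction q using Polynomial.induction_on' with
  | add p q hp hq => rw [map_add, Matrix.add_mulVec, hp, hq, eval_add, add_smul]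
  | monomial k c =>
    rw [aeval_monomial, eval_monomial, Algebra.algebraMap_eq_smul_one, smul_mul_assoc, one_mul,
      mulVec_smulMat, hpow, smul_smul]

lemma mulVec_map' {n : Type*} [Fintype n] {R S : Type*} [CommRing R] [CommRing S]
    (f : R →+* S) (A : Matrix n n R) (x : n → R) :
    (A.map f) *ᵥ (fun i => f (x i)) = fun i => f ((A *ᵥ x) i) := by
  funext i
  simp [Matrix.mulVec, dotProduct, map_sum, Matrix.map_apply]

lemma tendsto_zero_of_rec {E : Type*} [NormedAddCommGroup E] [NormedSpace ℂ E]
    (μ : ℂ) (hμ : ‖μ‖ < 1) (x b : ℕ → E) (hb : Tendsto b atTop (nhds 0))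
    (hrec : ∀ n, x (n + 1) = μ • x n + b n) : Tendsto x atTop (nhds 0) := by
  rw [NormedAddCommGroup.tendsto_nhds_zero]
  intro ε hε
  set c := ‖μ‖ with hc
  have hc0 : 0 ≤ c := norm_nonneg _
  have hb' : ∀ᶠ n in atTop, ‖b n‖ < ε * (1 - c) / 2 := by
    rw [NormedAddCommGroup.tendsto_nhds_zero] at hb
    exact hb _ (by nlinarith)
  obtain ⟨N, hN⟩ := eventually_atTop.mp hb'
  have key : ∀ k : ℕ, ‖x (N + k)‖ ≤ c ^ k * ‖x N‖ + ε / 2 := by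
    intro k
    induction k with
    | zero => simp; nlinarith
    | succ k ih =>
      have h1 : ‖x (N + (k + 1))‖ ≤ c * ‖x (N + k)‖ + ‖b (N + k)‖ := by
        rw [show N + (k + 1) = (N + k) + 1 by ring, hrec]
        calc ‖μ • x (N + k) + b (N + k)‖ ≤ ‖μ • x (N + k)‖ + ‖b (N + k)‖ := norm_add_le _ _
        _ = c * ‖x (N + k)‖ + ‖b (N + k)‖ := by rw [norm_smul]
      have h2 : ‖b (N + k)‖ < ε * (1 - c) / 2 := hN _ (Nat.le_add_right _ _)
      have h3 : c * ‖x (N + k)‖ ≤ c * (c ^ k * ‖x N‖ + ε / 2) :=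
        mul_le_mul_of_nonneg_left ih hc0
      calc ‖x (N + (k + 1))‖ ≤ c * (c ^ k * ‖x N‖ + ε / 2) + ε * (1 - c) / 2 := by linarith
      _ ≤ c ^ (k + 1) * ‖x N‖ + ε / 2 := by rw [pow_succ]; nlinarith
  have hpow : Tendsto (fun k : ℕ => c ^ k * ‖x N‖) atTop (nhds 0) := by
    have := (tendsto_pow_atTop_nhds_zero_of_lt_one hc0 hμ).mul_const ‖x N‖
    simpa using this
  obtain ⟨K, hK⟩ := eventually_atTop.mp (hpow.eventually_lt_const (by linarith : (0:ℝ) < ε / 2))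
  rw [eventually_atTop]
  refine ⟨N + K, fun n hn => ?_⟩
  have hk : n = N + (n - N) := by omega
  have hkK : K ≤ n - N := by omega
  calc ‖x n‖ = ‖x (N + (n - N))‖ := by rw [← hk]
  _ ≤ c ^ (n - N) * ‖x N‖ + ε / 2 := key _
  _ < ε / 2 + ε / 2 := by linarith [hK _ hkK]
  _ = ε := by ring

lemma tendsto_pow_mulVec_zero {d : ℕ} (A : Matrix (Fin d) (Fin d) ℂ) (s : Multiset ℂ)
    (hs : ∀ μ ∈ s, ‖μ‖ < 1) (x : Fin d → ℂ)
    (hx : (aeval A (s.map (fun μ => X - C μ)).prod) *ᵥ x = 0) :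
    Tendsto (fun n => (A ^ n) *ᵥ x) atTop (nhds 0) := by
  induction s using Multiset.induction generalizing x with
  | empty =>
    simp only [Multiset.map_zero, Multiset.prod_zero, _root_.map_one, Matrix.one_mulVec] at hx
    subst hx
    simpa using tendsto_const_nhds
  | cons μ t ih =>
    have hμ : ‖μ‖ < 1 := hs μ (Multiset.mem_cons_self _ _)
    have hprod : (Multiset.map (fun μ => X - C μ) (μ ::ₘ t)).prod
        = (Multiset.map (fun μ => X - C μ) t).prod * (X - C μ) := by
      rw [Multiset.map_cons, Multiset.prod_cons, mul_comm]
    set w : Fin d → ℂ := (A - μ • 1) *ᵥ x with hw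
    have hxw : (aeval A (Multiset.map (fun μ => X - C μ) t).prod) *ᵥ w = 0 := by
      rw [hw, Matrix.mulVec_mulVec, show A - μ • 1 = aeval A (X - C μ) by
        simp [Algebra.algebraMap_eq_smul_one], ← _root_.map_mul, ← hprod, hx]
    have hb : Tendsto (fun n => (A ^ n) *ᵥ w) atTop (nhds 0) :=
      ih (fun ν hν => hs ν (Multiset.mem_cons_of_mem hν)) w hxw
    refine tendsto_zero_of_rec μ hμ _ _ hb (fun n => ?_)
    rw [pow_succ, ← Matrix.mulVec_mulVec]
    have hAx : A *ᵥ x = w + μ • x := by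
      rw [hw, Matrix.sub_mulVec, mulVec_smulMat, Matrix.one_mulVec]
      abel
    rw [hAx, Matrix.mulVec_add, Matrix.mulVec_smul, add_comm]

/- Statement 10: If M is an integer matrix with a simple real eigenvalue λ > 1 having a
strictly positive left eigenvector, and all other complex eigenvalues of modulus < 1,
then any integer vector orthogonal to the left eigenvector lies in the generalized null
space of M: Mⁿ z = 0 for some n. -/

theorem orthogonal_int_vector_eventually_null
    (d : ℕ) (M : Matrix (Fin d) (Fin d) ℤ)
    (lam : ℝ) (hlam : 1 < lam)
    (hsimple : Polynomial.rootMultiplicity lam (M.map (Int.cast : ℤ → ℝ)).charpoly = 1)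
    (ωL : Fin d → ℝ) (hωL : ∀ i, 0 < ωL i)
    (heig : ωL ᵥ* (M.map (Int.cast : ℤ → ℝ)) = lam • ωL)
    (hsmall : ∀ μ : ℂ, (M.map (Int.cast : ℤ → ℂ)).charpoly.IsRoot μ → μ ≠ (lam : ℂ) →
      ‖μ‖ < 1)
    (z : Fin d → ℤ) (hz : ∑ i, ωL i * (z i : ℝ) = 0) :
    ∃ n : ℕ, (M ^ n) *ᵥ z = 0 := by
  set A : Matrix (Fin d) (Fin d) ℝ := M.map (Int.cast : ℤ → ℝ) with hA
  set p : ℝ[X] := A.charpoly with hp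
  have hpmonic : p.Monic := A.charpoly_monic
  have hp0 : p ≠ 0 := hpmonic.ne_zero
  have hfac : (X - C lam) * (p /ₘ (X - C lam)) = p := by
    have h := p.pow_mul_divByMonic_rootMultiplicity_eq lam
    rwa [hsimple, pow_one] at h
  set g : ℝ[X] := p /ₘ (X - C lam) with hg
  have hglam : eval lam g ≠ 0 := by
    have h := eval_divByMonic_pow_rootMultiplicity_ne_zero lam hp0
    rwa [hsimple, pow_one] at h
  set zR : Fin d → ℝ := fun i => ((z i : ℤ) : ℝ) with hzR
  set v : Fin d → ℝ := (aeval A g) *ᵥ zR with hv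
  -- v is in the kernel of A - lam•1
  have heigv : (A - lam • 1) *ᵥ v = 0 := by
    rw [hv, Matrix.mulVec_mulVec]
    have hmul : (A - lam • 1) * aeval A g = aeval A p := by
      rw [← hfac, _root_.map_mul]
      congr 1
      simp [Algebra.algebraMap_eq_smul_one]
    rw [hmul, Matrix.aeval_self_charpoly, Matrix.zero_mulVec]
  have hAv : A *ᵥ v = lam • v := by
    have h := heigv
    rw [Matrix.sub_mulVec, mulVec_smulMat, Matrix.one_mulVec, sub_eq_zero] at h
    exact h
  -- v is orthogonal to ωL
  have hωz : ωL ⬝ᵥ zR = 0 := hz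
  have hωv : ωL ⬝ᵥ v = 0 := by
    rw [hv, Matrix.dotProduct_mulVec, vecMul_aeval A ωL lam heig g,
      smul_dotProduct, hωz, smul_zero]
  -- key claim: v = 0
  have hv0 : v = 0 := by
    by_contra hvne
    obtain ⟨i0, hi0⟩ : ∃ i, v i ≠ 0 := by
      by_contra h
      push_neg at h
      exact hvne (funext h)
    haveI : Nonempty (Fin d) := ⟨i0⟩
    set ψ : Module.End ℝ (Fin d → ℝ) := Matrix.toLin' (A - lam • 1) with hψ
    have hψapp : ∀ u, ψ u = (A - lam • 1) *ᵥ u := fun u => Matrix.toLin'_apply _ _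
    have hψch : LinearMap.charpoly ψ = (A - lam • 1).charpoly := by
      rw [← LinearMap.charpoly_toMatrix ψ (Pi.basisFun ℝ (Fin d))]
      congr 1
      rw [hψ, ← Matrix.toLin_eq_toLin', LinearMap.toMatrix_toLin]
    have hfr : finrank ℝ (ψ.maxGenEigenspace 0) = 1 := by
      rw [LinearMap.finrank_maxGenEigenspace_zero_eq, hψch, charpoly_sub_smul_one,
        ← rootMultiplicity_eq_natTrailingDegree, hsimple]
    have hkerle : LinearMap.ker ψ ≤ ψ.maxGenEigenspace 0 := by
      intro u hu
      rw [Module.End.mem_maxGenEigenspace]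
      exact ⟨1, by simpa using LinearMap.mem_ker.mp hu⟩
    have hvker : v ∈ LinearMap.ker ψ := by
      rw [LinearMap.mem_ker, hψapp, heigv]
    have hkfr : finrank ℝ (LinearMap.ker ψ) = 1 := by
      have h1 : finrank ℝ (LinearMap.ker ψ) ≤ 1 := hfr ▸ Submodule.finrank_mono hkerle
      have h2 : LinearMap.ker ψ ≠ ⊥ := by
        intro h
        rw [h, Submodule.mem_bot] at hvker
        exact hvne hvker
      have h3 : finrank ℝ (LinearMap.ker ψ) ≠ 0 := fun h => h2 (Submodule.finrank_eq_zero.mp h)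
      omega
    -- the linear functional given by ωL
    set fω : (Fin d → ℝ) →ₗ[ℝ] ℝ :=
      { toFun := fun x => ωL ⬝ᵥ x
        map_add' := fun a b => dotProduct_add _ _ _
        map_smul' := fun c a => by simp [dotProduct_smul] } with hfω
    have hωω : (0:ℝ) < ωL ⬝ᵥ ωL := by
      apply Finset.sum_pos
      · intro i _
        exact mul_pos (hωL i) (hωL i)
      · exact Finset.univ_nonempty
    have hfrange : LinearMap.range fω = ⊤ := by
      rw [LinearMap.range_eq_top]
      intro c
      refine ⟨(c / (ωL ⬝ᵥ ωL)) • ωL, ?_⟩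
      show ωL ⬝ᵥ ((c / (ωL ⬝ᵥ ωL)) • ωL) = c
      rw [dotProduct_smul, smul_eq_mul, div_mul_cancel₀ _ (ne_of_gt hωω)]
    have hdim : finrank ℝ (Fin d → ℝ) = d := by
      simp [Module.finrank_fin_fun]
    have hrk1 : finrank ℝ (LinearMap.range ψ) + 1 = d := by
      have := LinearMap.finrank_range_add_finrank_ker ψ
      rw [hkfr, hdim] at this
      exact this
    have hrk2 : 1 + finrank ℝ (LinearMap.ker fω) = d := by
      have := LinearMap.finrank_range_add_finrank_ker fω
      rw [hfrange, hdim] at this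
      rwa [finrank_top, Module.finrank_self] at this
    have hle : LinearMap.range ψ ≤ LinearMap.ker fω := by
      rintro _ ⟨y, rfl⟩
      rw [LinearMap.mem_ker]
      show ωL ⬝ᵥ (ψ y) = 0
      rw [hψapp, Matrix.dotProduct_mulVec, Matrix.vecMul_sub, heig, vecMul_smulMat,
        Matrix.vecMul_one, sub_self, zero_dotProduct]
    have heq : LinearMap.range ψ = LinearMap.ker fω :=
      Submodule.eq_of_le_of_finrank_le hle (by omega)
    have hvrange : v ∈ LinearMap.range ψ := by
      rw [heq, LinearMap.mem_ker]
      exact hωv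
    obtain ⟨y, hy⟩ := hvrange
    have hkey : eval lam g • v = 0 := by
      rw [← aeval_mulVec_eig A v lam hAv g, ← hy, hψapp, Matrix.mulVec_mulVec,
        show aeval A g * (A - lam • 1) = aeval A p by
          rw [show (A - lam • 1) = aeval A (X - C lam) by simp [Algebra.algebraMap_eq_smul_one],
            ← _root_.map_mul, mul_comm g (X - C lam), hfac],
        Matrix.aeval_self_charpoly, Matrix.zero_mulVec]
    rcases smul_eq_zero.mp hkey with h | h
    · exact hglam h
    · exact hvne h
  -- now move to ℂ
  set AC : Matrix (Fin d) (Fin d) ℂ := M.map (Int.cast : ℤ → ℂ) with hAC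
  set zC : Fin d → ℂ := fun i => ((z i : ℤ) : ℂ) with hzC
  have hACmap : A.map (algebraMap ℝ ℂ) = AC := by
    ext i j
    simp [hA, hAC, Matrix.map_apply]
  set gC : ℂ[X] := g.map (algebraMap ℝ ℂ) with hgC
  have hgmonic : g.Monic := (monic_X_sub_C lam).of_mul_monic_left (hfac.symm ▸ hpmonic)
  have hgCmonic : gC.Monic := hgmonic.map _
  have hgC0 : (aeval AC gC) *ᵥ zC = 0 := by
    have h1 : aeval AC gC = (aeval A g).map (algebraMap ℝ ℂ) := by
      rw [hgC, aeval_map_algebraMap, ← hACmap,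
        show A.map (algebraMap ℝ ℂ) = (AlgHom.mapMatrix (Algebra.ofId ℝ ℂ)) A from rfl,
        aeval_algHom_apply]
      rfl
    have h2 : zC = fun i => algebraMap ℝ ℂ (zR i) := by
      funext i
      simp [hzC, hzR]
    rw [h1, h2, mulVec_map' (algebraMap ℝ ℂ) (aeval A g) zR, ← hv, hv0]
    funext i
    simp
  have hchC : AC.charpoly = p.map (algebraMap ℝ ℂ) := by
    rw [← hACmap, Matrix.charpoly_map]
  have hroots : ∀ μ ∈ gC.roots, ‖μ‖ < 1 := by
    intro μ hμ
    have hroot : gC.IsRoot μ := (mem_roots hgCmonic.ne_zero).mp hμ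
    have hμne : μ ≠ (lam : ℂ) := by
      intro h
      apply hglam
      have : gC.eval (algebraMap ℝ ℂ lam) = algebraMap ℝ ℂ (eval lam g) := by
        rw [hgC, eval_map, eval₂_at_apply]
      rw [h] at hroot
      have h0 : algebraMap ℝ ℂ (eval lam g) = 0 := by
        rw [← this]
        exact hroot
      rwa [show algebraMap ℝ ℂ (eval lam g) = ((eval lam g : ℝ) : ℂ) from rfl,
        Complex.ofReal_eq_zero] at h0
    have hchroot : AC.charpoly.IsRoot μ := by
      rw [hchC, ← hfac, Polynomial.map_mul, IsRoot, eval_mul]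
      rw [IsRoot] at hroot
      rw [hroot, mul_zero]
    have := hsmall μ hchroot hμne
    exact this
  have hsplit : gC = (gC.roots.map (fun a => X - C a)).prod :=
    (IsAlgClosed.splits _).eq_prod_roots_of_monic hgCmonic
  have htends : Tendsto (fun n => (AC ^ n) *ᵥ zC) atTop (nhds 0) := by
    apply tendsto_pow_mulVec_zero AC gC.roots hroots zC
    rw [← hsplit]
    exact hgC0
  have hACn : ∀ n : ℕ, (AC ^ n) *ᵥ zC = fun i => (((M ^ n) *ᵥ z) i : ℂ) := by
    intro n
    have h1 : AC ^ n = (M ^ n).map (Int.cast : ℤ → ℂ) := by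
      have := _root_.map_pow ((Int.castRingHom ℂ).mapMatrix) M n
      rw [RingHom.mapMatrix_apply, RingHom.mapMatrix_apply] at this
      exact this.symm
    rw [h1]
    exact mulVec_map' (Int.castRingHom ℂ) (M ^ n) z
  rw [NormedAddCommGroup.tendsto_nhds_zero] at htends
  obtain ⟨n, hn⟩ := eventually_atTop.mp (htends 1 one_pos)
  refine ⟨n, ?_⟩
  funext i
  have hle := norm_le_pi_norm ((AC ^ n) *ᵥ zC) i
  have hlt : ‖((AC ^ n) *ᵥ zC) i‖ < 1 := lt_of_le_of_lt hle (hn n le_rfl)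
  rw [hACn n] at hlt
  simp only [Complex.norm_intCast] at hlt
  rw [← Int.cast_abs] at hlt
  have : |((M ^ n) *ᵥ z) i| < 1 := by exact_mod_cast hlt
  rw [Pi.zero_apply]
  exact Int.abs_lt_one_iff.mp this
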